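/- If d is a pseudometric on a space S, then the unnormalized optimal transport cost with blank augmentation, defined on finite multisets of S by OT_d(ρ(X,Y)) where ρ pads the smaller multiset with copies of a fixed element 𝟘 until both have equal cardinality, satisfies the triangle inequality: OT_d(ρ(X,Y)) ≤ OT_d(ρ(X,Z)) + OT_d(ρ(Z,Y)) for all finite multisets X, Y, Z. -/

import Mathlib

open scoped BigOperators

noncomputable section

/-- Unnormalized optimal transport between equal-cardinality multisets (represented
as lists): the minimum over bijective matchings of the summed ground costs. -/
noncomputable def listOT {α : Type*} (d : α → α → ℝ) (X Y : List α) : ℝ :=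
  sInf {c : ℝ | ∃ Y' : List α, Y.Perm Y' ∧ c = (List.zipWith d X Y').sum}

/-- Blank augmentation `ρ`: pad the smaller multiset with copies of the blank
element `b` so that both multisets have equal cardinality. -/
def pad {α : Type*} (b : α) (X Y : List α) : List α × List α :=
  (X ++ List.replicate (Y.length - X.length) b,
   Y ++ List.replicate (X.length - Y.length) b)

/-- Blank-augmented unnormalized optimal transport `OT_d(ρ(X, Y))`. -/
noncomputable def otPad {α : Type*} (d : α → α → ℝ) (b : α) (X Y : List α) : ℝ :=
  listOT d (pad b X Y).1 (pad b X Y).2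

namespace OTAux

variable {α : Type*}

lemma set_eq (d : α → α → ℝ) (X Y : List α) :
    {c : ℝ | ∃ Y' : List α, Y.Perm Y' ∧ c = (List.zipWith d X Y').sum}
      = (fun Y' => (List.zipWith d X Y').sum) '' {Y' | Y.Perm Y'} := by
  ext c
  simp only [Set.mem_image, Set.mem_setOf_eq]
  exact ⟨fun ⟨Y', h1, h2⟩ => ⟨Y', h1, h2.symm⟩, fun ⟨Y', h1, h2⟩ => ⟨Y', h1, h2.symm⟩⟩

lemma set_finite (d : α → α → ℝ) (X Y : List α) :
    {c : ℝ | ∃ Y' : List α, Y.Perm Y' ∧ c = (List.zipWith d X Y').sum}.Finite := by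
  classical
  rw [set_eq]
  apply Set.Finite.image
  have : {Y' : List α | Y.Perm Y'} = ↑(Y.permutations.toFinset) := by
    ext l; simp [List.mem_permutations, List.perm_comm]
  rw [this]
  exact (Y.permutations.toFinset).finite_toSet

lemma set_nonempty (d : α → α → ℝ) (X Y : List α) :
    {c : ℝ | ∃ Y' : List α, Y.Perm Y' ∧ c = (List.zipWith d X Y').sum}.Nonempty :=
  ⟨(List.zipWith d X Y).sum, Y, List.Perm.refl Y, rfl⟩

lemma listOT_le (d : α → α → ℝ) {X Y Y' : List α} (h : Y.Perm Y') :
    listOT d X Y ≤ (List.zipWith d X Y').sum :=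
  csInf_le (set_finite d X Y).bddBelow ⟨Y', h, rfl⟩

lemma listOT_exists (d : α → α → ℝ) (X Y : List α) :
    ∃ Y', Y.Perm Y' ∧ listOT d X Y = (List.zipWith d X Y').sum :=
  (set_nonempty d X Y).csInf_mem (set_finite d X Y)

/-- Transfer a matching along a permutation of the first list. -/
lemma transfer (d : α → α → ℝ) {X X' : List α} (h : X.Perm X') :
    ∀ Y' : List α, Y'.length = X.length →
      ∃ Y'', Y'.Perm Y'' ∧ (List.zipWith d X' Y'').sum = (List.zipWith d X Y').sum := by
  induction h with
  | nil => intro Y' _; exact ⟨Y', List.Perm.refl _, rfl⟩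
  | cons x h ih =>
      intro Y' hl
      match Y' with
      | [] => simp at hl
      | y :: t =>
          simp only [List.length_cons] at hl
          obtain ⟨t'', ht, hs⟩ := ih t (by omega)
          exact ⟨y :: t'', ht.cons y, by simp [hs]⟩
  | swap x y l =>
      intro Y' hl
      match Y' with
      | [] => simp at hl
      | [_] => simp at hl
      | a :: b' :: r =>
          refine ⟨b' :: a :: r, List.Perm.swap b' a r, ?_⟩
          simp; ring
  | trans h1 h2 ih1 ih2 =>
      intro Y' hl
      obtain ⟨Y₁, hp1, hs1⟩ := ih1 Y' hl
      obtain ⟨Y₂, hp2, hs2⟩ := ih2 Y₁ (by rw [← hp1.length_eq, hl, h1.length_eq])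
      exact ⟨Y₂, hp1.trans hp2, by rw [hs2, hs1]⟩

variable [PseudoMetricSpace α]

/-- Pointwise triangle inequality for zipped sums. -/
lemma zip_tri : ∀ (A C B : List α), C.length = A.length → B.length = A.length →
    (List.zipWith dist A B).sum ≤ (List.zipWith dist A C).sum + (List.zipWith dist C B).sum := by
  intro A
  induction A with
  | nil =>
      intro C B hC hB
      rw [List.length_eq_zero_iff.mp hC, List.length_eq_zero_iff.mp hB]
      simp
  | cons a A ih =>
      intro C B hC hB
      match C, B with
      | c :: C, y :: B =>
          simp only [List.length_cons] at hC hB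
          simp only [List.zipWith_cons_cons, List.sum_cons]
          have := ih C B (by omega) (by omega)
          have htri := dist_triangle a c y
          linarith

/-- Triangle inequality for equal-length lists. -/
lemma listOT_triangle {A C B : List α} (hAC : A.length = C.length)
    (hCB : C.length = B.length) :
    listOT dist A B ≤ listOT dist A C + listOT dist C B := by
  obtain ⟨C', hC', hsC⟩ := listOT_exists dist A C
  obtain ⟨B₀, hB₀, hsB⟩ := listOT_exists dist C B
  obtain ⟨B'', hB'', hs⟩ := transfer dist hC' B₀ (by rw [← hB₀.length_eq, ← hCB])
  calc listOT dist A B ≤ (List.zipWith dist A B'').sum := listOT_le dist (hB₀.trans hB'')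
    _ ≤ (List.zipWith dist A C').sum + (List.zipWith dist C' B'').sum := by
        apply zip_tri
        · rw [← hC'.length_eq, ← hAC]
        · rw [← hB''.length_eq, ← hB₀.length_eq, ← hCB, ← hAC]
    _ = listOT dist A C + listOT dist C B := by rw [hsC, hsB, hs]

omit [PseudoMetricSpace α] in
/-- split a list at index j -/
lemma split_at {A : List α} {j : ℕ} (h : j < A.length) :
    ∃ A₁ a A₂, A = A₁ ++ a :: A₂ ∧ A₁.length = j := by
  have h1 : A = A.take j ++ A.drop j := (List.take_append_drop j A).symm
  have h2 : A.drop j ≠ [] := by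
    intro hn
    have : (A.drop j).length = A.length - j := List.length_drop
    rw [hn] at this
    simp at this; omega
  obtain ⟨a, A₂, hA₂⟩ := List.exists_cons_of_ne_nil h2
  refine ⟨A.take j, a, A₂, ?_, by rw [List.length_take]; omega⟩
  rw [← hA₂]; exact h1

/-- Removing one blank pair from each side does not increase OT. -/
lemma unpad_one (b : α) {A B : List α} (h : A.length = B.length) :
    listOT dist A B ≤ listOT dist (A ++ [b]) (B ++ [b]) := by
  obtain ⟨B1, hp, hs⟩ := listOT_exists dist (A ++ [b]) (B ++ [b])
  have hb : b ∈ B1 := hp.mem_iff.mp (by simp)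
  obtain ⟨u, v, huv⟩ := List.append_of_mem hb
  have hlen : B1.length = B.length + 1 := by rw [← hp.length_eq]; simp
  rcases List.eq_nil_or_concat v with hv | ⟨v₀, y, hv⟩
  · -- v = []: B1 = u ++ [b]
    subst hv; subst huv
    have hu : u.length = A.length := by simp at hlen; omega
    have hBu : B.Perm u := by
      have h1 : (B ++ [b]).Perm (b :: B) := List.perm_append_singleton b B
      have h2 : (u ++ [b]).Perm (b :: u) := List.perm_append_singleton b u
      exact (h1.symm.trans (hp.trans h2)).cons_inv
    have : (List.zipWith dist (A ++ [b]) (u ++ [b])).sum = (List.zipWith dist A u).sum := by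
      rw [List.zipWith_append hu.symm]
      simp
    calc listOT dist A B ≤ (List.zipWith dist A u).sum := listOT_le dist hBu
      _ = listOT dist (A ++ [b]) (B ++ [b]) := by rw [hs, this]
  · -- v = v₀ ++ [y]
    rw [List.concat_eq_append] at hv
    subst hv; subst huv
    have hvlen : u.length + 1 + v₀.length = A.length := by
      simp at hlen; omega
    have hj : u.length < A.length := by omega
    obtain ⟨A₁, a, A₂, hA, hA₁⟩ := split_at hj
    have hA₂ : A₂.length = v₀.length := by
      have := congrArg List.length hA
      simp at this; omega
    -- compute the cost of the given matching
    have e1 : (List.zipWith dist (A ++ [b]) (u ++ b :: (v₀ ++ [y]))).sum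
        = (List.zipWith dist A₁ u).sum + dist a b
          + (List.zipWith dist A₂ v₀).sum + dist b y := by
      rw [hA]
      have : (A₁ ++ a :: A₂) ++ [b] = A₁ ++ a :: (A₂ ++ [b]) := by simp
      rw [this, List.zipWith_append hA₁]
      simp only [List.zipWith_cons_cons]
      rw [List.zipWith_append hA₂]
      simp [List.sum_append]; ring
    -- the rerouted matching
    have e2 : (List.zipWith dist A (u ++ y :: v₀)).sum
        = (List.zipWith dist A₁ u).sum + dist a y + (List.zipWith dist A₂ v₀).sum := by
      rw [hA, List.zipWith_append hA₁]
      simp [List.sum_append]; ring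
    have hBperm : B.Perm (u ++ y :: v₀) := by
      have h1 : (B ++ [b]).Perm (b :: B) := List.perm_append_singleton b B
      have h2 : (u ++ b :: (v₀ ++ [y])).Perm (b :: (u ++ (v₀ ++ [y]))) := List.perm_middle
      have hB' : B.Perm (u ++ (v₀ ++ [y])) := (h1.symm.trans (hp.trans h2)).cons_inv
      have h3 : (u ++ (v₀ ++ [y])).Perm (y :: (u ++ v₀)) := by
        have : u ++ (v₀ ++ [y]) = (u ++ v₀) ++ [y] := by simp
        rw [this]; exact List.perm_append_singleton y (u ++ v₀)
      exact hB'.trans (h3.trans List.perm_middle.symm)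
    calc listOT dist A B ≤ (List.zipWith dist A (u ++ y :: v₀)).sum := listOT_le dist hBperm
      _ = (List.zipWith dist A₁ u).sum + dist a y + (List.zipWith dist A₂ v₀).sum := e2
      _ ≤ (List.zipWith dist A₁ u).sum + dist a b
            + (List.zipWith dist A₂ v₀).sum + dist b y := by
          have := dist_triangle a b y; linarith
      _ = listOT dist (A ++ [b]) (B ++ [b]) := by rw [hs, e1]

/-- Padding both lists with `k` blanks does not decrease OT. -/
lemma le_pad_rep (b : α) {A B : List α} (h : A.length = B.length) (k : ℕ) :
    listOT dist A B ≤ listOT dist (A ++ List.replicate k b) (B ++ List.replicate k b) := by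
  induction k with
  | zero => simp
  | succ k ih =>
      have hrep : List.replicate (k + 1) b = List.replicate k b ++ [b] :=
        List.replicate_succ'
      rw [hrep, ← List.append_assoc, ← List.append_assoc]
      refine ih.trans (unpad_one b ?_)
      simp [h]

/-- Padding both lists with `k` blanks does not increase OT (easy direction). -/
lemma pad_rep_le (b : α) {A B : List α} (h : A.length = B.length) (k : ℕ) :
    listOT dist (A ++ List.replicate k b) (B ++ List.replicate k b) ≤ listOT dist A B := by
  obtain ⟨B', hB', hsum⟩ := listOT_exists dist A B
  have hperm : (B ++ List.replicate k b).Perm (B' ++ List.replicate k b) :=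
    hB'.append_right _
  have hlen : A.length = B'.length := h.trans hB'.length_eq
  calc listOT dist (A ++ List.replicate k b) (B ++ List.replicate k b)
      ≤ (List.zipWith dist (A ++ List.replicate k b) (B' ++ List.replicate k b)).sum :=
        listOT_le dist hperm
    _ = (List.zipWith dist A B').sum := by
        rw [List.zipWith_append hlen]
        simp [List.zipWith_replicate, List.sum_replicate]
    _ = listOT dist A B := hsum.symm

end OTAux

theorem otPad_triangle {α : Type*} [PseudoMetricSpace α] (b : α)
    (X Y Z : List α) :
    otPad dist b X Y ≤ otPad dist b X Z + otPad dist b Z Y := by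
  classical
  set n1 := X.length with hn1
  set n2 := Y.length with hn2
  set n3 := Z.length with hn3
  set L := max (max n1 n2) n3 with hL
  have h1L : n1 ≤ L := by omega
  have h2L : n2 ≤ L := by omega
  have h3L : n3 ≤ L := by omega
  -- padded-to-L lists
  set XL := X ++ List.replicate (L - n1) b with hXL
  set YL := Y ++ List.replicate (L - n2) b with hYL
  set ZL := Z ++ List.replicate (L - n3) b with hZL
  have lXL : XL.length = L := by simp [hXL]; omega
  have lYL : YL.length = L := by simp [hYL]; omega
  have lZL : ZL.length = L := by simp [hZL]; omega
  -- step 1 : otPad X Y ≤ listOT XL YL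
  have step1 : otPad dist b X Y ≤ listOT dist XL YL := by
    have hk : L - max n1 n2 + (n2 - n1) = L - n1 := by omega
    have hk' : L - max n1 n2 + (n1 - n2) = L - n2 := by omega
    have e1 : XL = (X ++ List.replicate (n2 - n1) b)
        ++ List.replicate (L - max n1 n2) b := by
      rw [hXL, List.append_assoc, ← List.replicate_add]
      congr 2; omega
    have e2 : YL = (Y ++ List.replicate (n1 - n2) b)
        ++ List.replicate (L - max n1 n2) b := by
      rw [hYL, List.append_assoc, ← List.replicate_add]
      congr 2; omega
    rw [e1, e2]
    have hot : otPad dist b X Y = listOT dist (X ++ List.replicate (n2 - n1) b)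
        (Y ++ List.replicate (n1 - n2) b) := rfl
    rw [hot]
    exact OTAux.le_pad_rep b
      (by simp only [List.length_append, List.length_replicate]; omega) _
  -- step 2 : triangle at length L
  have step2 : listOT dist XL YL ≤ listOT dist XL ZL + listOT dist ZL YL :=
    OTAux.listOT_triangle (by rw [lXL, lZL]) (by rw [lZL, lYL])
  -- step 3 : listOT XL ZL ≤ otPad X Z
  have step3 : listOT dist XL ZL ≤ otPad dist b X Z := by
    have e1 : XL = (X ++ List.replicate (n3 - n1) b)
        ++ List.replicate (L - max n1 n3) b := by
      rw [hXL, List.append_assoc, ← List.replicate_add]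
      congr 2; omega
    have e2 : ZL = (Z ++ List.replicate (n1 - n3) b)
        ++ List.replicate (L - max n1 n3) b := by
      rw [hZL, List.append_assoc, ← List.replicate_add]
      congr 2; omega
    rw [e1, e2]
    have hot : otPad dist b X Z = listOT dist (X ++ List.replicate (n3 - n1) b)
        (Z ++ List.replicate (n1 - n3) b) := rfl
    rw [hot]
    exact OTAux.pad_rep_le b
      (by simp only [List.length_append, List.length_replicate]; omega) _
  -- step 4 : listOT ZL YL ≤ otPad Z Y
  have step4 : listOT dist ZL YL ≤ otPad dist b Z Y := by
    have e1 : ZL = (Z ++ List.replicate (n2 - n3) b)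
        ++ List.replicate (L - max n3 n2) b := by
      rw [hZL, List.append_assoc, ← List.replicate_add]
      congr 2; omega
    have e2 : YL = (Y ++ List.replicate (n3 - n2) b)
        ++ List.replicate (L - max n3 n2) b := by
      rw [hYL, List.append_assoc, ← List.replicate_add]
      congr 2; omega
    rw [e1, e2]
    have hot : otPad dist b Z Y = listOT dist (Z ++ List.replicate (n2 - n3) b)
        (Y ++ List.replicate (n3 - n2) b) := rfl
    rw [hot]
    exact OTAux.pad_rep_le b
      (by simp only [List.length_append, List.length_replicate]; omega) _
  calc otPad dist b X Y ≤ listOT dist XL YL := step1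
    _ ≤ listOT dist XL ZL + listOT dist ZL YL := step2
    _ ≤ otPad dist b X Z + otPad dist b Z Y := add_le_add step3 step4

end
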